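/- Let V be a finite-dimensional vector space over a field F of characteristic 0, and let r, h ∈ GL(V) with h² = Id and h·r·h⁻¹ = r⁻¹, with r semisimple. Then dim V₁(h) − dim V₁(rh) = dim(V₋₁(r) ∩ V₁(h)) − dim(V₋₁(r) ∩ V₋₁(h)), where V_λ(x) denotes the λ-eigenspace of x. -/

import Mathlib

open Module

/-- Dimension formula: if `h² = 1`, `h·r·h⁻¹ = r⁻¹` and `r` is semisimple, then
`dim V₁(h) − dim V₁(rh) = dim(V₋₁(r) ∩ V₁(h)) − dim(V₋₁(r) ∩ V₋₁(h))`
(stated additively to avoid truncated subtraction). -/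
theorem stmt_7 {F V : Type*} [Field F] [CharZero F] [AddCommGroup V] [Module F V]
    [FiniteDimensional F V] (r h : (Module.End F V)ˣ)
    (hh : h * h = 1) (hrh : h * r * h⁻¹ = r⁻¹)
    (hss : (r : Module.End F V).IsSemisimple) :
    finrank F (Module.End.eigenspace (h : Module.End F V) 1) +
      finrank F ↥(Module.End.eigenspace (r : Module.End F V) (-1) ⊓
        Module.End.eigenspace (h : Module.End F V) (-1)) =
    finrank F (Module.End.eigenspace ((r * h : (Module.End F V)ˣ) : Module.End F V) 1) +
      finrank F ↥(Module.End.eigenspace (r : Module.End F V) (-1) ⊓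
        Module.End.eigenspace (h : Module.End F V) 1) := by
  set R : Module.End F V := (r : Module.End F V) with hRdef
  set H : Module.End F V := (h : Module.End F V) with hHdef
  set R' : Module.End F V := ((r⁻¹ : (Module.End F V)ˣ) : Module.End F V) with hR'def
  -- basic pointwise identities
  have RR' : ∀ y : V, R (R' y) = y := by
    intro y
    have : (R * R') = 1 := by
      rw [hRdef, hR'def, ← Units.val_mul, mul_inv_cancel, Units.val_one]
    calc R (R' y) = (R * R') y := rfl
    _ = y := by rw [this]; rfl
  have R'R : ∀ y : V, R' (R y) = y := by
    intro y
    have : (R' * R) = 1 := by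
      rw [hRdef, hR'def, ← Units.val_mul, inv_mul_cancel, Units.val_one]
    calc R' (R y) = (R' * R) y := rfl
    _ = y := by rw [this]; rfl
  have hr_units : h * r = r⁻¹ * h := mul_inv_eq_iff_eq_mul.mp hrh
  have hr'_units : h * r⁻¹ = r * h := by
    have h2 : h * r⁻¹ * h⁻¹ = r := by
      have := congrArg (·⁻¹) hrh
      simpa [mul_inv_rev, mul_assoc] using this
    exact mul_inv_eq_iff_eq_mul.mp h2
  have HRp : ∀ y : V, H (R y) = R' (H y) := by
    intro y
    have : H * R = R' * H := by
      rw [hRdef, hHdef, hR'def, ← Units.val_mul, ← Units.val_mul, hr_units]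
    calc H (R y) = (H * R) y := rfl
    _ = (R' * H) y := by rw [this]
    _ = R' (H y) := rfl
  have HR'p : ∀ y : V, H (R' y) = R (H y) := by
    intro y
    have : H * R' = R * H := by
      rw [hRdef, hHdef, hR'def, ← Units.val_mul, ← Units.val_mul, hr'_units]
    calc H (R' y) = (H * R') y := rfl
    _ = (R * H) y := by rw [this]
    _ = R (H y) := rfl
  -- the operators g = R + 1 and g' = R' + 1
  set g : Module.End F V := R + 1 with hgdef
  set g' : Module.End F V := R' + 1 with hg'def
  have gapp : ∀ y : V, g y = R y + y := by
    intro y; simp [hgdef]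
  have g'app : ∀ y : V, g' y = R' y + y := by
    intro y; simp [hg'def]
  -- the eigenspaces
  set Wm : Submodule F V := Module.End.eigenspace R (-1) with hWmdef
  set hp : Submodule F V := Module.End.eigenspace H 1 with hhpdef
  set hm : Submodule F V := Module.End.eigenspace H (-1) with hhmdef
  set sp : Submodule F V := Module.End.eigenspace (R * H) 1 with hspdef
  have mWm : ∀ x : V, x ∈ Wm ↔ R x = -x := by
    intro x; rw [hWmdef, Module.End.mem_eigenspace_iff]; simp
  have mhp : ∀ x : V, x ∈ hp ↔ H x = x := by
    intro x; rw [hhpdef, Module.End.mem_eigenspace_iff]; simp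
  have mhm : ∀ x : V, x ∈ hm ↔ H x = -x := by
    intro x; rw [hhmdef, Module.End.mem_eigenspace_iff]; simp
  have msp : ∀ x : V, x ∈ sp ↔ R (H x) = x := by
    intro x; rw [hspdef, Module.End.mem_eigenspace_iff]
    simp [Module.End.mul_apply]
  -- Wm = ker g
  have eWm : Wm = LinearMap.ker g := by
    ext x
    rw [mWm x, LinearMap.mem_ker, gapp]
    constructor
    · intro hx; rw [hx]; abel
    · intro hx; linear_combination (norm := module) hx
  -- semisimplicity : ker g² = ker g
  have kker2 : ∀ y : V, g (g y) = 0 → g y = 0 := by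
    have hg : R - (-1 : F) • 1 = g := by
      rw [hgdef]; simp [sub_neg_eq_add]
    have e2 := hss.isFinitelySemisimple.genEigenspace_eq_eigenspace (-1)
      (k := ((2 : ℕ) : ℕ∞)) (by norm_num)
    intro y hy
    have hy2 : y ∈ Module.End.genEigenspace R (-1) ((2 : ℕ) : ℕ∞) := by
      rw [Module.End.mem_genEigenspace_nat, LinearMap.mem_ker, hg, pow_two,
        Module.End.mul_apply, hy]
    rw [e2, Module.End.mem_eigenspace_iff] at hy2
    rw [gapp, hy2]
    simp
  -- maps between eigenspaces
  have mgh : ∀ x : V, x ∈ hp → g x ∈ sp := by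
    intro x hx
    rw [mhp] at hx
    rw [msp, gapp]
    simp only [map_add, HRp, hx, RR']
    abel
  have mg's : ∀ x : V, x ∈ sp → g' x ∈ hp := by
    intro x hx
    rw [msp] at hx
    have hHx : H x = R' x := by
      have := congrArg R' hx
      rwa [R'R] at this
    rw [mhp, g'app]
    simp only [map_add, HR'p, hHx, RR']
    abel
  -- T = g * g' and its kernel facts
  set T : Module.End F V := g * g' with hTdef
  have Tapp : ∀ y : V, T y = g (g' y) := fun y => rfl
  have Tggy : ∀ y : V, g (g y) = R (T y) := by
    intro y
    rw [Tapp, gapp, gapp, g'app, gapp]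
    simp only [map_add, RR']
    abel
  have hTker : ∀ y : V, T y = 0 → g y = 0 := by
    intro y hy
    apply kker2
    rw [Tggy, hy, map_zero]
  have hTker2 : ∀ y : V, T (T y) = 0 → T y = 0 := by
    intro y hy
    have h1 : g (T y) = 0 := hTker _ hy
    rw [Tapp] at h1 ⊢
    exact kker2 _ h1
  have hTsp : ∀ x ∈ sp, T x ∈ sp := by
    intro x hx
    rw [Tapp x]
    exact mgh _ (mg's _ hx)
  -- the image I = g(hp)
  set I : Submodule F V := Submodule.map g hp with hIdef
  have hI_sp : I ≤ sp := by
    rintro x ⟨u, hu, rfl⟩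
    exact mgh _ hu
  have hIWm : I ⊓ Wm = ⊥ := by
    rw [eq_bot_iff]
    intro x hx
    rw [Submodule.mem_inf] at hx
    obtain ⟨hxI, hxW⟩ := hx
    obtain ⟨u, hu, rfl⟩ := Submodule.mem_map.mp hxI
    rw [eWm, LinearMap.mem_ker] at hxW
    rw [Submodule.mem_bot]
    exact kker2 _ hxW
  -- restriction of T to sp
  set Tr : sp →ₗ[F] sp := T.restrict hTsp with hTrdef
  have Trcoe : ∀ x : sp, (Tr x : V) = T (x : V) := by
    intro x; rw [hTrdef, LinearMap.restrict_apply]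
  have hkerTr : LinearMap.ker (Tr ∘ₗ Tr) = LinearMap.ker Tr := by
    ext x
    simp only [LinearMap.mem_ker, LinearMap.comp_apply]
    constructor
    · intro hx
      have : T (T (x : V)) = 0 := by
        have := congrArg (Subtype.val) hx
        rwa [Trcoe, Trcoe] at this
      have h2 : T (x : V) = 0 := hTker2 _ this
      exact Subtype.ext (by rw [Trcoe, h2]; simp)
    · intro hx; rw [hx, map_zero]
  have hrangeTr : LinearMap.range (Tr ∘ₗ Tr) = LinearMap.range Tr := by
    apply Submodule.eq_of_le_of_finrank_le (LinearMap.range_comp_le_range Tr Tr)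
    have e1 := LinearMap.finrank_range_add_finrank_ker (Tr ∘ₗ Tr)
    have e2 := LinearMap.finrank_range_add_finrank_ker Tr
    rw [hkerTr] at e1
    omega
  -- key decomposition : sp ≤ I ⊔ (Wm ⊓ sp)
  have key2 : sp ≤ I ⊔ (Wm ⊓ sp) := by
    intro v hv
    set vv : sp := ⟨v, hv⟩ with hvv
    have : Tr vv ∈ LinearMap.range (Tr ∘ₗ Tr) := by
      rw [hrangeTr]; exact ⟨vv, rfl⟩
    obtain ⟨u, hu⟩ := this
    rw [LinearMap.comp_apply] at hu
    set w : sp := vv - Tr u with hw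
    have hTrw : Tr w = 0 := by rw [hw, map_sub, hu, sub_self]
    have hTw : T (w : V) = 0 := by
      have := congrArg Subtype.val hTrw
      rwa [Trcoe] at this
    have hgw : g (w : V) = 0 := hTker _ hTw
    have hwWm : (w : V) ∈ Wm := by rw [eWm]; exact hgw
    have hTuI : T (u : V) ∈ I := by
      rw [Tapp]
      exact Submodule.mem_map.mpr ⟨g' (u : V), mg's _ u.2, rfl⟩
    have hsplit : v = T (u : V) + (w : V) := by
      have : (w : V) = v - T (u : V) := by
        rw [hw]; simp [Trcoe, hvv]
      rw [this]; abel
    rw [hsplit]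
    exact Submodule.add_mem_sup hTuI (Submodule.mem_inf.mpr ⟨hwWm, w.2⟩)
  have espI : sp = I ⊔ (Wm ⊓ sp) := le_antisymm key2 (sup_le hI_sp inf_le_right)
  -- Wm ⊓ sp = Wm ⊓ hm
  have e4 : Wm ⊓ sp = Wm ⊓ hm := by
    ext x
    simp only [Submodule.mem_inf, mWm, msp, mhm]
    constructor
    · rintro ⟨h1, h2⟩
      refine ⟨h1, ?_⟩
      have hHx : H x = R' x := by
        have := congrArg R' h2
        rwa [R'R] at this
      have hR'x : R' x = -x := by
        have := congrArg R' h1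
        rw [R'R, map_neg] at this
        have h3 := congrArg Neg.neg this
        simp at h3
        rw [h3]
      rw [hHx, hR'x]
    · rintro ⟨h1, h2⟩
      refine ⟨h1, ?_⟩
      rw [h2, map_neg, h1, neg_neg]
  -- dimension count for hp via g
  have d1 : finrank F hp = finrank F (Wm ⊓ hp : Submodule F V) + finrank F I := by
    have e2 := LinearMap.finrank_range_add_finrank_ker (g.domRestrict hp)
    rw [LinearMap.range_domRestrict] at e2
    have ekr : LinearMap.ker (g.domRestrict hp) =
        Submodule.comap hp.subtype (LinearMap.ker g ⊓ hp) := by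
      rw [LinearMap.ker_domRestrict, Submodule.comap_inf, Submodule.comap_subtype_self,
        inf_top_eq]
    have efr : finrank F (LinearMap.ker (g.domRestrict hp)) =
        finrank F (LinearMap.ker g ⊓ hp : Submodule F V) := by
      rw [ekr]
      exact LinearEquiv.finrank_eq (Submodule.comapSubtypeEquivOfLe inf_le_right)
    rw [efr] at e2
    rw [← eWm] at e2
    rw [hIdef]
    omega
  -- dimension count for sp
  have d2 : finrank F sp = finrank F I + finrank F (Wm ⊓ hm : Submodule F V) := by
    have e5 := Submodule.finrank_sup_add_finrank_inf_eq I (Wm ⊓ sp)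
    rw [← espI] at e5
    have e6 : I ⊓ (Wm ⊓ sp) = ⊥ := by
      rw [eq_bot_iff, ← hIWm]
      exact inf_le_inf_left I inf_le_left
    rw [e6, finrank_bot, e4] at e5
    omega
  -- finish
  have hgoal : (((r * h : (Module.End F V)ˣ)) : Module.End F V) = R * H := by
    rw [Units.val_mul]
  rw [hgoal]
  rw [d1, d2]
  omega
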